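/- arXiv:2002.00400 — 2 statements merged into one kernel-verified Lean document; each statement's English description precedes it below -/
import Mathlib

section
/- Let f be a holomorphic self-mapping of the unit disc Δ ⊂ ℂ and suppose there is a sequence {ζ_k} in Δ converging non-tangentially to 1 such that f(ζ_k) = ζ_k + O(|ζ_k − 1|³) as k → ∞. Then Re((f(ζ) − ζ)/(ζ − 1)²) ≥ 0 for all ζ ∈ Δ. -/
open Complex Metric Set Filter
open scoped ComplexOrder

noncomputable section

/-- `ℂⁿ` as a Euclidean space. -/
abbrev Cn (n : ℕ) : Type := EuclideanSpace ℂ (Fin n)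

/-- The open unit disc `Δ ⊂ ℂ`. -/
def unitDisc : Set ℂ := Metric.ball 0 1

/-- The Hermitian inner product `⟨v, w⟩ = ∑ⱼ vⱼ * conj wⱼ` on `ℂⁿ`
(linear in the first variable, as in the paper). -/
def herm {n : ℕ} (v w : Cn n) : ℂ := ∑ j, v j * (starRingEnd ℂ) (w j)

/-- Componentwise complex conjugation of a vector in `ℂⁿ`. -/
def conjVec {n : ℕ} (v : Cn n) : Cn n := WithLp.toLp 2 (fun j => (starRingEnd ℂ) (v j))

/-- The Poincaré distance `tanh⁻¹ |(z - w)/(1 - z * conj w)|` on the unit disc. -/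
def poincareDist (z w : ℂ) : ℝ :=
  (1 / 2) * Real.log ((1 + ‖(z - w) / (1 - z * (starRingEnd ℂ) w)‖) /
    (1 - ‖(z - w) / (1 - z * (starRingEnd ℂ) w)‖))

/-- The Kobayashi distance on a domain `Ω ⊆ ℂⁿ`, defined via chains of
holomorphic discs. -/
def kobayashiDist {n : ℕ} (Ω : Set (Cn n)) (z w : Cn n) : ℝ :=
  sInf {d : ℝ | ∃ (m : ℕ) (zs : Fin (m + 1) → Cn n) (φ : Fin m → ℂ → Cn n) (a b : Fin m → ℂ),
    zs 0 = z ∧ zs (Fin.last m) = w ∧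
    (∀ j : Fin m, DifferentiableOn ℂ (φ j) unitDisc ∧ MapsTo (φ j) unitDisc Ω ∧
      a j ∈ unitDisc ∧ b j ∈ unitDisc ∧
      φ j (a j) = zs j.castSucc ∧ φ j (b j) = zs j.succ) ∧
    d = ∑ j : Fin m, poincareDist (a j) (b j)}

/-- A complex geodesic of `Ω`: a holomorphic map `Δ → Ω` which is an isometry
between the Poincaré distance and the Kobayashi distance. -/
def IsComplexGeodesic {n : ℕ} (Ω : Set (Cn n)) (φ : ℂ → Cn n) : Prop :=
  DifferentiableOn ℂ φ unitDisc ∧ MapsTo φ unitDisc Ω ∧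
    ∀ ζ₁ ∈ unitDisc, ∀ ζ₂ ∈ unitDisc,
      kobayashiDist Ω (φ ζ₁) (φ ζ₂) = poincareDist ζ₁ ζ₂

/-- The Stolz (non-tangential approach) region in the unit disc with vertex `1`
and aperture `β`. -/
def stolzRegion (β : ℝ) : Set ℂ :=
  {ζ ∈ unitDisc | ‖ζ - 1‖ < β * (1 - ‖ζ‖)}

/-- The non-tangential approach region `Γ_β(p) = {z ∈ Ω : |z - p| < β dist(z, ∂Ω)}`. -/
def ntRegion {n : ℕ} (Ω : Set (Cn n)) (p : Cn n) (β : ℝ) : Set (Cn n) :=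
  {z ∈ Ω | ‖z - p‖ < β * Metric.infDist z (frontier Ω)}

/-- The Wirtinger derivative `∂f/∂z_j` of `f : ℂⁿ → ℂ` at `p`. -/
def wder {n : ℕ} (f : Cn n → ℂ) (p : Cn n) (j : Fin n) : ℂ :=
  (1 / 2) * (fderiv ℝ f p (EuclideanSpace.single j 1) -
    Complex.I * fderiv ℝ f p (EuclideanSpace.single j Complex.I))

/-- The conjugate Wirtinger derivative `∂f/∂z̄_j` of `f : ℂⁿ → ℂ` at `p`. -/
def wderBar {n : ℕ} (f : Cn n → ℂ) (p : Cn n) (j : Fin n) : ℂ :=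
  (1 / 2) * (fderiv ℝ f p (EuclideanSpace.single j 1) +
    Complex.I * fderiv ℝ f p (EuclideanSpace.single j Complex.I))

/-- Iterated holomorphic partial derivatives `∂^{|ν|}/∂z^ν`, the multi-index
being recorded as a list of coordinate directions. -/
def wderMulti {n : ℕ} : List (Fin n) → (Cn n → ℂ) → Cn n → ℂ
  | [], f => f
  | j :: l, f => fun p => wder (wderMulti l f) p j

/-- The complex tangent space `T_p^{1,0}∂Ω = {v : ∑ⱼ ∂r/∂z_j(p) vⱼ = 0}` associated
with a defining function `r`. -/
def cxTangentAt {n : ℕ} (r : Cn n → ℝ) (p : Cn n) : Set (Cn n) :=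
  {v | ∑ j, wder (fun z => (r z : ℂ)) p j * v j = 0}

/-- The Levi form `∑_{j,k} ∂²r/∂z_j∂z̄_k(p) vⱼ v̄ₖ` of `r` at `p`. -/
def leviQuad {n : ℕ} (r : Cn n → ℝ) (p : Cn n) (v : Cn n) : ℂ :=
  ∑ j, ∑ k, wder (fun z => wderBar (fun w => (r w : ℂ)) z k) p j * v j * (starRingEnd ℂ) (v k)

/-- The symmetric complex Hessian form `∑_{j,k} ∂²r/∂z_j∂z_k(p) vⱼ vₖ` of `r` at `p`. -/
def symmQuad {n : ℕ} (r : Cn n → ℝ) (p : Cn n) (v : Cn n) : ℂ :=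
  ∑ j, ∑ k, wder (fun z => wder (fun w => (r w : ℂ)) z k) p j * v j * v k

/-- `r` is a `C^m` defining function of `Ω` exhibiting strong linear convexity:
the Levi form dominates the symmetric Hessian on complex tangent vectors. -/
def IsSLCDefining {n : ℕ} (m : ℕ) (Ω : Set (Cn n)) (r : Cn n → ℝ) : Prop :=
  ContDiff ℝ (m : ℕ∞) r ∧ Ω = {z | r z < 0} ∧
    (∀ p ∈ frontier Ω, fderiv ℝ r p ≠ 0) ∧
    ∀ p ∈ frontier Ω, ∀ v ∈ cxTangentAt r p, v ≠ 0 →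
      ‖symmQuad r p v‖ < (leviQuad r p v).re

/-- A bounded strongly linearly convex domain in `ℂⁿ` with `C^m`-smooth boundary. -/
def IsBoundedSLCDomain {n : ℕ} (m : ℕ) (Ω : Set (Cn n)) : Prop :=
  IsOpen Ω ∧ IsConnected Ω ∧ Bornology.IsBounded Ω ∧ ∃ r : Cn n → ℝ, IsSLCDefining m Ω r

/-- `ν` is the unit outward normal vector to `∂Ω` at `p`. -/
def IsUnitOutwardNormalAt {n : ℕ} (Ω : Set (Cn n)) (p ν : Cn n) : Prop :=
  ‖ν‖ = 1 ∧ (∀ v ∈ tangentConeAt ℝ (frontier Ω) p, (herm v ν).re = 0) ∧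
    ∃ ε > (0 : ℝ), ∀ t : ℝ, 0 < t → t < ε →
      p + t • ν ∉ closure Ω ∧ p - t • ν ∈ Ω

/-- `φs` is the dual mapping of the complex geodesic `φ` (with boundary derivative
data `φd`): it is holomorphic on `Δ`, continuous on `Δ̄`, satisfies
`φ*(ζ) = ζ μ(ζ) conj(ν∘φ(ζ))` on `∂Δ` with `μ > 0`, and is normalized by
`⟨φ', conj φ*⟩ = 1` on `Δ̄` (equivalently `∑ⱼ φⱼ' φ*ⱼ = 1`). -/
def IsDualMap {n : ℕ} (Ω : Set (Cn n)) (φ φd φs : ℂ → Cn n) : Prop :=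
  DifferentiableOn ℂ φs unitDisc ∧ ContinuousOn φs (closure unitDisc) ∧
    (∃ μ : ℂ → ℝ, ∀ ζ ∈ Metric.sphere (0 : ℂ) 1, 0 < μ ζ ∧
      ∃ ν : Cn n, IsUnitOutwardNormalAt Ω (φ ζ) ν ∧
        φs ζ = (ζ * (μ ζ : ℂ)) • conjVec ν) ∧
    ∀ ζ ∈ closure unitDisc, ∑ j, φd ζ j * φs ζ j = 1

/-- Full boundary data for a complex geodesic of `Ω`: the geodesic `φ`, its
continuous extension to `Δ̄`, a continuous extension `φd` of its derivative,
and a dual mapping `φs`. -/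
def GeodesicPkg {n : ℕ} (Ω : Set (Cn n)) (φ φd φs : ℂ → Cn n) : Prop :=
  IsComplexGeodesic Ω φ ∧ ContinuousOn φ (closure unitDisc) ∧
    ContinuousOn φd (closure unitDisc) ∧ (∀ ζ ∈ unitDisc, HasDerivAt φ (φd ζ) ζ) ∧
    IsDualMap Ω φ φd φs

/-- The one-parameter family of (parabolic, for `t ≠ 0`) automorphisms of the
unit disc fixing `1`:  `σ_t(ζ) = ((1 - it)ζ + it)/(-itζ + 1 + it)`. -/
def parabolicAut (t : ℝ) (ζ : ℂ) : ℂ :=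
  ((1 - Complex.I * t) * ζ + Complex.I * t) / (-(Complex.I * t) * ζ + 1 + Complex.I * t)

/-- The set `L_p = {v ∈ ℂⁿ : |v| = 1, ⟨v, ν_p⟩ > 0}` of inward directions at `p`. -/
def normalDirections {n : ℕ} (νp : Cn n) : Set (Cn n) :=
  {v | ‖v‖ = 1 ∧ 0 < herm v νp}

/-- `Φ` assigns to each `v ∈ L_p` the preferred complex geodesic of `Ω` associated
to `v` with base point `p`: `Φ v 1 = p`, `(Φ v)'(1) = ⟨v, ν_p⟩ v` and
`d/dθ|₀ |Φ* v (e^{iθ})| = 0`. -/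
def IsPreferredGeodesicFamily {n : ℕ} (Ω : Set (Cn n)) (p νp : Cn n)
    (Φ Φd Φs : Cn n → ℂ → Cn n) : Prop :=
  ∀ v ∈ normalDirections νp, GeodesicPkg Ω (Φ v) (Φd v) (Φs v) ∧ Φ v 1 = p ∧
    Φd v 1 = herm v νp • v ∧
    HasDerivAt (fun θ : ℝ => ‖Φs v (Complex.exp (θ * Complex.I))‖) 0 0

/-- Every point of `Ω̄ \ {p}` lies on exactly one closed preferred geodesic disc. -/
def UniqueGeodesicCover {n : ℕ} (Ω : Set (Cn n)) (p νp : Cn n)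
    (Φ : Cn n → ℂ → Cn n) : Prop :=
  ∀ z ∈ closure Ω \ {p}, ∃! vζ : Cn n × ℂ,
    vζ.1 ∈ normalDirections νp ∧ vζ.2 ∈ closure unitDisc ∧ Φ vζ.1 vζ.2 = z

/-- `Ψ` is the boundary spherical representation of `Ω̄` onto the closed unit
ball associated with the preferred geodesics at `p`: `Ψ p = ν_p` and
`Ψ(φ_v(ζ)) = ν_p + (ζ - 1)⟨v, ν_p⟩ v`. -/
def IsBoundarySphericalRep {n : ℕ} (Ω : Set (Cn n)) (p νp : Cn n)
    (Φ : Cn n → ℂ → Cn n) (Ψ : Cn n → Cn n) : Prop :=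
  MapsTo Ψ (closure Ω) (Metric.closedBall (0 : Cn n) 1) ∧ Ψ p = νp ∧
    ∀ v ∈ normalDirections νp, ∀ ζ ∈ closure unitDisc,
      Ψ (Φ v ζ) = νp + ((ζ - 1) * herm v νp) • v

/-- Plurisubharmonicity on `Ω` of a (real-valued) function: upper semicontinuity
together with the sub-mean value inequality on every closed complex disc in `Ω`. -/
def PSHOn {n : ℕ} (u : Cn n → ℝ) (Ω : Set (Cn n)) : Prop :=
  UpperSemicontinuousOn u Ω ∧
    ∀ (a b : Cn n) (R : ℝ), 0 < R → (∀ ζ : ℂ, ‖ζ‖ ≤ R → a + ζ • b ∈ Ω) →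
      u a ≤ (2 * Real.pi)⁻¹ *
        ∫ θ in (0 : ℝ)..(2 * Real.pi), u (a + ((R : ℂ) * Complex.exp (θ * Complex.I)) • b)

/-- Local boundedness (`u ∈ L^∞_loc(Ω)`). -/
def LocBoundedOn {n : ℕ} (u : Cn n → ℝ) (Ω : Set (Cn n)) : Prop :=
  ∀ x ∈ Ω, ∃ U ∈ nhds x, Bornology.IsBounded (u '' (U ∩ Ω))

/-- Maximality of `u` on `Ω` in the sense of Sadullaev.  By the fundamental
theorem of Bedford–Taylor, for a locally bounded plurisubharmonic `u` this is
equivalent to the homogeneous complex Monge–Ampère equation `(dd^c u)^n = 0`. -/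
def IsMaximalPSHOn {n : ℕ} (u : Cn n → ℝ) (Ω : Set (Cn n)) : Prop :=
  ∀ G : Set (Cn n), IsOpen G → closure G ⊆ Ω → IsCompact (closure G) →
    ∀ v : Cn n → ℝ, PSHOn v G →
      (∀ x ∈ frontier G, Filter.limsup v (nhdsWithin x G) ≤ u x) →
      ∀ z ∈ G, v z ≤ u z

/-- The horosphere `E_Ω(p, z₀, R)` of center `p ∈ ∂Ω`, pole `z₀ ∈ Ω` and radius
`R > 0`. -/
def horosphere {n : ℕ} (Ω : Set (Cn n)) (p z₀ : Cn n) (R : ℝ) : Set (Cn n) :=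
  {z ∈ Ω | ∃ L : ℝ,
    Tendsto (fun w => kobayashiDist Ω z w - kobayashiDist Ω z₀ w) (nhdsWithin p Ω) (nhds L) ∧
    L < (1 / 2) * Real.log R}

/-- The solution class of the pluricomplex Poisson kernel problem (1.2):
`u` is plurisubharmonic and locally bounded, solves `(dd^c u)^n = 0` (maximality),
is negative, tends to `0` at every boundary point other than `p`, and behaves
like `-|z - p|⁻¹` non-tangentially at `p`. -/
def SolvesMAProblem {n : ℕ} (Ω : Set (Cn n)) (p : Cn n) (u : Cn n → ℝ) : Prop :=
  PSHOn u Ω ∧ LocBoundedOn u Ω ∧ IsMaximalPSHOn u Ω ∧ (∀ z ∈ Ω, u z < 0) ∧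
    (∀ x ∈ frontier Ω, x ≠ p → Tendsto u (nhdsWithin x Ω) (nhds 0)) ∧
    ∀ β : ℝ, 1 < β → ∃ C : ℝ, 1 < C ∧ ∃ δ : ℝ, 0 < δ ∧
      ∀ z ∈ ntRegion Ω p β, ‖z - p‖ < δ →
        C⁻¹ < -u z * ‖z - p‖ ∧ -u z * ‖z - p‖ < C

/-- Membership in the Hölder class `C^{k,α}(s)`: `f` agrees on `s` with a global
`C^k` function whose top-order derivatives are `α`-Hölder on `s`. -/
def HolderExtends {E F : Type*} [NormedAddCommGroup E] [NormedSpace ℝ E]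
    [NormedAddCommGroup F] [NormedSpace ℝ F] (k : ℕ) (α : ℝ) (s : Set E) (f : E → F) : Prop :=
  ∃ g : E → F, EqOn g f s ∧ ContDiff ℝ (k : ℕ∞) g ∧
    ∃ C : NNReal, HolderOnWith C α.toNNReal (iteratedFDeriv ℝ k g) s

/-- `ϱ` is the Lempert left inverse of the complex geodesic `φ` with dual map `φs`:
`ϱ ∘ φ = Id` and `⟨z - φ(ϱ z), conj φ*(ϱ z)⟩ = 0` on `Ω`. -/
def IsLempertLeftInverse {n : ℕ} (Ω : Set (Cn n)) (φ φs : ℂ → Cn n) (ϱ : Cn n → ℂ) : Prop :=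
  MapsTo ϱ Ω unitDisc ∧ (∀ ζ ∈ unitDisc, ϱ (φ ζ) = ζ) ∧
    ∀ z ∈ Ω, ∑ j, (z j - φ (ϱ z) j) * φs (ϱ z) j = 0

/-- Closeness in the `C^{1,α}(Δ̄)` norm of `f` (with derivative `fd`) and `g`
(with derivative `gd`). -/
def C1alphaClose {n : ℕ} (α ε : ℝ) (f fd g gd : ℂ → Cn n) : Prop :=
  (∀ ζ ∈ closure unitDisc, ‖f ζ - g ζ‖ ≤ ε ∧ ‖fd ζ - gd ζ‖ ≤ ε) ∧
    ∀ ζ₁ ∈ closure unitDisc, ∀ ζ₂ ∈ closure unitDisc,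
      ‖(fd ζ₁ - gd ζ₁) - (fd ζ₂ - gd ζ₂)‖ ≤ ε * ‖ζ₁ - ζ₂‖ ^ α

/-- The pluricomplex Poisson kernel of the unit ball:
`P_{Bⁿ,q}(w) = -(1 - |w|²)/|1 - ⟨w, q⟩|²`. -/
def pluriPoissonBall {n : ℕ} (q w : Cn n) : ℝ :=
  -(1 - ‖w‖ ^ 2) / ‖1 - herm w q‖ ^ 2

/-- The Levi (complex Hessian) matrix `(∂²u/∂z_j∂z̄_k)` of `u : ℂⁿ → ℝ` at `z`. -/
def leviMatrix {n : ℕ} (u : Cn n → ℝ) (z : Cn n) : Matrix (Fin n) (Fin n) ℂ :=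
  Matrix.of fun j k => wder (fun w => wderBar (fun x => (u x : ℂ)) w k) z j

/-- The boundary derivative property `lim_{t→1⁻} u(γ(t))(1-t) = -Re(2/⟨γ'(1), ν_p⟩)`
along every non-tangential smooth curve `γ` terminating at `p`. -/
def SatisfiesBoundaryDerivativeProperty {n : ℕ} (Ω : Set (Cn n)) (p νp : Cn n)
    (u : Cn n → ℝ) : Prop :=
  ∀ γ : ℝ → Cn n, ContDiffOn ℝ (⊤ : ℕ∞) γ (Set.Icc (0 : ℝ) 1) → γ 1 = p →
    MapsTo γ (Set.Ico (0 : ℝ) 1) Ω →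
    (∃ β : ℝ, 1 < β ∧ ∀ t ∈ Set.Ico (0 : ℝ) 1, γ t ∈ ntRegion Ω p β) →
    Tendsto (fun t => u (γ t) * (1 - t)) (nhdsWithin 1 (Set.Ico (0 : ℝ) 1))
      (nhds (-(2 / herm (derivWithin γ (Set.Icc (0 : ℝ) 1) 1) νp).re))

end

section BKAux

private lemma normSq_lt_one_of_mem {z : ℂ} (hz : z ∈ unitDisc) : Complex.normSq z < 1 := by
  have h : ‖z‖ < 1 := by
    simpa [unitDisc] using mem_ball_zero_iff.mp hz
  rw [Complex.normSq_eq_norm_sq]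
  exact pow_lt_one₀ (norm_nonneg z) h (by norm_num)

private lemma mem_of_normSq_lt_one {z : ℂ} (hz : Complex.normSq z < 1) : z ∈ unitDisc := by
  rw [unitDisc, mem_ball_zero_iff]
  nlinarith [Complex.normSq_eq_norm_sq z, norm_nonneg z]

noncomputable def mob (a ζ : ℂ) : ℂ := (a - ζ) / (1 - (starRingEnd ℂ) a * ζ)

private lemma normSq_key (a b : ℂ) :
    normSq (1 - (starRingEnd ℂ) a * b) - normSq (a - b)
      = (1 - normSq a) * (1 - normSq b) := by
  simp only [Complex.normSq_apply, Complex.sub_re, Complex.sub_im, Complex.mul_re,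
    Complex.mul_im, Complex.conj_re, Complex.conj_im, Complex.one_re, Complex.one_im]
  ring

private lemma den_ne {a b : ℂ} (ha : normSq a < 1) (hb : normSq b < 1) :
    (1 : ℂ) - (starRingEnd ℂ) a * b ≠ 0 := by
  intro h
  have h1 : (starRingEnd ℂ) a * b = 1 := by linear_combination -h
  have h2 : normSq ((starRingEnd ℂ) a * b) = 1 := by rw [h1, normSq_one]
  rw [normSq_mul, normSq_conj] at h2
  nlinarith [normSq_nonneg a, normSq_nonneg b]

private lemma normSq_mob_lt {a b : ℂ} (ha : normSq a < 1) (hb : normSq b < 1) :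
    normSq (mob a b) < 1 := by
  have hd := den_ne ha hb
  have hdpos : 0 < normSq (1 - (starRingEnd ℂ) a * b) := normSq_pos.2 hd
  rw [mob, normSq_div, div_lt_one hdpos]
  nlinarith [normSq_key a b, mul_pos (by linarith : (0:ℝ) < 1 - normSq a)
    (by linarith : (0:ℝ) < 1 - normSq b)]

private lemma mob_self (a : ℂ) : mob a a = 0 := by simp [mob]

private lemma mob_zero (a : ℂ) : mob a 0 = a := by simp [mob]

private lemma mob_mob {a b : ℂ} (ha : normSq a < 1) (hb : normSq b < 1) :
    mob a (mob a b) = b := by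
  have hD : (1:ℂ) - (starRingEnd ℂ) a * b ≠ 0 := den_ne ha hb
  have h2 : (1:ℂ) - (starRingEnd ℂ) a * mob a b ≠ 0 := den_ne ha (normSq_mob_lt ha hb)
  have ha1 : (1:ℂ) - a * (starRingEnd ℂ) a ≠ 0 := by
    rw [Complex.mul_conj, sub_ne_zero]
    exact_mod_cast (ne_of_lt ha).symm
  unfold mob at h2 ⊢
  rw [div_eq_iff h2]
  have key : (a - b) / (1 - (starRingEnd ℂ) a * b) * (1 - (starRingEnd ℂ) a * b) = a - b :=
    div_mul_cancel₀ _ hD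
  linear_combination -key

private lemma mob_diff {a : ℂ} (ha : normSq a < 1) : DifferentiableOn ℂ (mob a) unitDisc := by
  unfold mob
  apply DifferentiableOn.div (by fun_prop) (by fun_prop)
  intro ζ hζ
  exact den_ne ha (normSq_lt_one_of_mem hζ)

private lemma mob_maps {a : ℂ} (ha : normSq a < 1) : MapsTo (mob a) unitDisc unitDisc :=
  fun b hb => mem_of_normSq_lt_one (normSq_mob_lt ha (normSq_lt_one_of_mem hb))

private lemma schwarz_pick {f : ℂ → ℂ} (hd : DifferentiableOn ℂ f unitDisc)
    (hm : MapsTo f unitDisc unitDisc) {z w : ℂ} (hz : z ∈ unitDisc) (hw : w ∈ unitDisc) :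
    normSq (mob (f w) (f z)) ≤ normSq (mob w z) := by
  have hwn := normSq_lt_one_of_mem hw
  have hzn := normSq_lt_one_of_mem hz
  have hfw := normSq_lt_one_of_mem (hm hw)
  have hgd : DifferentiableOn ℂ (fun ζ => mob (f w) (f (mob w ζ))) unitDisc := by
    apply DifferentiableOn.comp (mob_diff hfw) (DifferentiableOn.comp hd (mob_diff hwn) (mob_maps hwn))
    exact fun x hx => hm ((mob_maps hwn) hx)
  have hgm : MapsTo (fun ζ => mob (f w) (f (mob w ζ))) unitDisc unitDisc := fun x hx =>
    (mob_maps hfw) (hm ((mob_maps hwn) hx))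
  have hg0 : mob (f w) (f (mob w 0)) = 0 := by rw [mob_zero, mob_self]
  have hmem : mob w z ∈ unitDisc := mem_of_normSq_lt_one (normSq_mob_lt hwn hzn)
  have habs : ‖mob (f w) (f (mob w (mob w z)))‖ ≤ ‖mob w z‖ := by
    apply Complex.norm_le_norm_of_mapsTo_ball hgd (hgm.mono_right ball_subset_closedBall) hg0
    simpa using mem_ball_zero_iff.mp hmem
  rw [mob_mob hwn hzn] at habs
  rw [Complex.normSq_eq_norm_sq, Complex.normSq_eq_norm_sq]
  exact pow_le_pow_left₀ (norm_nonneg _) habs 2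

private lemma sp_ineq {f : ℂ → ℂ} (hd : DifferentiableOn ℂ f unitDisc)
    (hm : MapsTo f unitDisc unitDisc) {z w : ℂ} (hz : z ∈ unitDisc) (hw : w ∈ unitDisc) :
    (1 - normSq z) * (1 - normSq w) * normSq (1 - (starRingEnd ℂ) (f w) * f z)
      ≤ (1 - normSq (f z)) * (1 - normSq (f w)) * normSq (1 - (starRingEnd ℂ) w * z) := by
  have hwn := normSq_lt_one_of_mem hw
  have hzn := normSq_lt_one_of_mem hz
  have hfw := normSq_lt_one_of_mem (hm hw)
  have hfz := normSq_lt_one_of_mem (hm hz)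
  have h := schwarz_pick hd hm hz hw
  rw [mob, mob, normSq_div, normSq_div] at h
  have d1 : 0 < normSq (1 - (starRingEnd ℂ) (f w) * f z) := normSq_pos.2 (den_ne hfw hfz)
  have d2 : 0 < normSq (1 - (starRingEnd ℂ) w * z) := normSq_pos.2 (den_ne hwn hzn)
  rw [div_le_div_iff₀ d1 d2] at h
  nlinarith [normSq_key w z, normSq_key (f w) (f z), h, d1, d2]

private lemma julia_lemma {f : ℂ → ℂ} (hf : DifferentiableOn ℂ f unitDisc)
    (hmap : MapsTo f unitDisc unitDisc)
    (ζ : ℕ → ℂ) (hζ : ∀ k, ζ k ∈ unitDisc)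
    (hlim : Tendsto ζ atTop (nhds 1))
    (β : ℝ) (hβ : 1 < β) (hnt : ∀ᶠ k in atTop, ζ k ∈ stolzRegion β)
    (C : ℝ) (hC : ∀ k, ‖f (ζ k) - ζ k‖ ≤ C * ‖ζ k - 1‖ ^ 3)
    {z : ℂ} (hz : z ∈ unitDisc) :
    normSq (1 - f z) * (1 - normSq z) ≤ normSq (1 - z) * (1 - normSq (f z)) := by
  have hawlt : ∀ k, ‖ζ k‖ < 1 := fun k => by
    simpa [unitDisc] using mem_ball_zero_iff.mp (hζ k)
  have haylt : ∀ k, ‖f (ζ k)‖ < 1 := fun k => by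
    simpa [unitDisc] using mem_ball_zero_iff.mp (hmap (hζ k))
  have hzn := normSq_lt_one_of_mem hz
  have hfzn := normSq_lt_one_of_mem (hmap hz)
  -- abs limits
  have habsw : Tendsto (fun k => ‖ζ k‖) atTop (nhds 1) := by
    simpa [Function.comp_def] using (continuous_norm.tendsto 1).comp hlim
  have hsub1 : Tendsto (fun k => ζ k - 1) atTop (nhds 0) := by
    simpa using hlim.sub_const 1
  have hd3 : Tendsto (fun k => C * ‖ζ k - 1‖ ^ 3) atTop (nhds 0) := by
    have h1 : Tendsto (fun k => ‖ζ k - 1‖) atTop (nhds 0) := by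
      simpa [Function.comp_def] using (continuous_norm.tendsto 0).comp hsub1
    have h2 := (h1.pow 3)
    simpa using tendsto_const_nhds.mul h2
  have hdiff0 : Tendsto (fun k => f (ζ k) - ζ k) atTop (nhds 0) := by
    apply squeeze_zero_norm _ hd3
    intro k
    simpa using hC k
  have hy : Tendsto (fun k => f (ζ k)) atTop (nhds 1) := by
    have := hdiff0.add hlim
    simpa using this
  have habsy : Tendsto (fun k => ‖f (ζ k)‖) atTop (nhds 1) := by
    simpa [Function.comp_def] using (continuous_norm.tendsto 1).comp hy
  -- t_k → 0
  set t : ℕ → ℝ := fun k => ‖ζ k - 1‖ ^ 3 / (1 - ‖ζ k‖) with ht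
  have ht0 : Tendsto t atTop (nhds 0) := by
    have hb : Tendsto (fun k => β ^ 3 * (1 - ‖ζ k‖) ^ 2) atTop (nhds 0) := by
      have h1 : Tendsto (fun k => (1 - ‖ζ k‖) ^ 2) atTop (nhds 0) := by
        simpa using ((tendsto_const_nhds (x := (1:ℝ))).sub habsw).pow 2
      simpa using (tendsto_const_nhds (x := β ^ 3)).mul h1
    have hnn : ∀ k, 0 ≤ t k := fun k =>
      div_nonneg (pow_nonneg (norm_nonneg _) 3) (by linarith [hawlt k])
    have hub : ∀ᶠ k in atTop, t k ≤ β ^ 3 * (1 - ‖ζ k‖) ^ 2 := by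
      filter_upwards [hnt] with k hk
      obtain ⟨-, hk2⟩ := hk
      have hpos : (0:ℝ) < 1 - ‖ζ k‖ := by linarith [hawlt k]
      have h3 : ‖ζ k - 1‖ ^ 3 ≤ (β * (1 - ‖ζ k‖)) ^ 3 :=
        pow_le_pow_left₀ (norm_nonneg _) (le_of_lt hk2) 3
      simp only [ht]
      rw [div_le_iff₀ hpos]
      calc ‖ζ k - 1‖ ^ 3 ≤ (β * (1 - ‖ζ k‖)) ^ 3 := h3
        _ = β ^ 3 * (1 - ‖ζ k‖) ^ 2 * (1 - ‖ζ k‖) := by ring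
    exact squeeze_zero' (Eventually.of_forall hnn) hub hb
  -- u_k → 1
  set u : ℕ → ℝ := fun k =>
    (1 + C * t k) * ((1 + ‖f (ζ k)‖) / (1 + ‖ζ k‖)) with hu
  have hu1 : Tendsto u atTop (nhds 1) := by
    have h1 : Tendsto (fun k => 1 + C * t k) atTop (nhds 1) := by
      have := (tendsto_const_nhds (x := (1:ℝ))).add ((tendsto_const_nhds (x := C)).mul ht0)
      simpa using this
    have h2 : Tendsto (fun k => (1 + ‖f (ζ k)‖) / (1 + ‖ζ k‖))
        atTop (nhds 1) := by
      have := ((tendsto_const_nhds (x := (1:ℝ))).add habsy).div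
        ((tendsto_const_nhds (x := (1:ℝ))).add habsw) (by norm_num)
      norm_num at this
      exact this
    have := h1.mul h2
    simpa using this
  -- r_k ≤ u_k
  set r : ℕ → ℝ := fun k => (1 - normSq (f (ζ k))) / (1 - normSq (ζ k)) with hr
  have hru : ∀ k, r k ≤ u k := by
    intro k
    have haw := hawlt k
    have hay := haylt k
    have hpw : (0:ℝ) < 1 - normSq (ζ k) := by linarith [normSq_lt_one_of_mem (hζ k)]
    have hawpos : (0:ℝ) < 1 - ‖ζ k‖ := by linarith
    have key1 : ‖ζ k‖ ≤ ‖f (ζ k)‖ + C * ‖ζ k - 1‖ ^ 3 := by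
      have tri : ‖ζ k‖ ≤ ‖f (ζ k)‖ + ‖ζ k - f (ζ k)‖ := by
        have := norm_add_le (f (ζ k)) (ζ k - f (ζ k))
        simpa using this
      have heq : ‖ζ k - f (ζ k)‖ = ‖f (ζ k) - ζ k‖ := by
        rw [← neg_sub, norm_neg]
      linarith [hC k, tri, heq ▸ (hC k)]
    rw [hr, div_le_iff₀ hpw]
    have e1 : 1 - normSq (ζ k) = (1 - ‖ζ k‖) * (1 + ‖ζ k‖) := by
      rw [Complex.normSq_eq_norm_sq]; ring
    have e2 : 1 - normSq (f (ζ k)) = (1 - ‖f (ζ k)‖) * (1 + ‖f (ζ k)‖) := by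
      rw [Complex.normSq_eq_norm_sq]; ring
    have e3 : t k * (1 - ‖ζ k‖) = ‖ζ k - 1‖ ^ 3 :=
      div_mul_cancel₀ _ (ne_of_gt hawpos)
    rw [e1, e2, hu]
    have e4 : (1 + C * t k) * ((1 + ‖f (ζ k)‖) / (1 + ‖ζ k‖)) *
        ((1 - ‖ζ k‖) * (1 + ‖ζ k‖))
        = ((1 - ‖ζ k‖) + C * ‖ζ k - 1‖ ^ 3) *
          (1 + ‖f (ζ k)‖) := by
      have hne : (0:ℝ) < 1 + ‖ζ k‖ := by positivity
      have hdiv : (1 + ‖f (ζ k)‖) / (1 + ‖ζ k‖) * (1 + ‖ζ k‖) = 1 + ‖f (ζ k)‖ :=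
        div_mul_cancel₀ _ hne.ne'
      linear_combination (1 + C * t k) * (1 - ‖ζ k‖) * hdiv + C * (1 + ‖f (ζ k)‖) * e3
    rw [e4]
    have : 1 - ‖f (ζ k)‖ ≤ (1 - ‖ζ k‖) + C * ‖ζ k - 1‖ ^ 3 := by
      linarith
    have hp : (0:ℝ) ≤ 1 + ‖f (ζ k)‖ := by positivity
    nlinarith
  -- pointwise inequality
  have hsp : ∀ k, (1 - normSq z) * normSq (1 - (starRingEnd ℂ) (f (ζ k)) * f z)
      ≤ (1 - normSq (f z)) * normSq (1 - (starRingEnd ℂ) (ζ k) * z) * max (r k) 1 := by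
    intro k
    have H := sp_ineq hf hmap hz (hζ k)
    have hpw : (0:ℝ) < 1 - normSq (ζ k) := by linarith [normSq_lt_one_of_mem (hζ k)]
    have step : (1 - normSq z) * normSq (1 - (starRingEnd ℂ) (f (ζ k)) * f z)
        ≤ (1 - normSq (f z)) * normSq (1 - (starRingEnd ℂ) (ζ k) * z) * r k := by
      rw [hr, mul_div_assoc' , le_div_iff₀ hpw]
      nlinarith [H]
    have hnn : (0:ℝ) ≤ (1 - normSq (f z)) * normSq (1 - (starRingEnd ℂ) (ζ k) * z) :=
      mul_nonneg (by linarith) (normSq_nonneg _)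
    calc (1 - normSq z) * normSq (1 - (starRingEnd ℂ) (f (ζ k)) * f z)
        ≤ (1 - normSq (f z)) * normSq (1 - (starRingEnd ℂ) (ζ k) * z) * r k := step
      _ ≤ _ := mul_le_mul_of_nonneg_left (le_max_left _ _) hnn
  -- limits
  have hmax : Tendsto (fun k => max (r k) 1) atTop (nhds 1) := by
    have hup : Tendsto (fun k => max (u k) 1) atTop (nhds 1) := by
      have := hu1.max (tendsto_const_nhds (x := (1:ℝ)))
      simpa using this
    apply tendsto_of_tendsto_of_tendsto_of_le_of_le' (tendsto_const_nhds) hup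
    · exact Eventually.of_forall fun k => le_max_right _ _
    · exact Eventually.of_forall fun k => max_le_max (hru k) le_rfl
  have hconjy : Tendsto (fun k => (starRingEnd ℂ) (f (ζ k))) atTop (nhds 1) := by
    simpa [Function.comp_def] using (Complex.continuous_conj.tendsto 1).comp hy
  have hconjw : Tendsto (fun k => (starRingEnd ℂ) (ζ k)) atTop (nhds 1) := by
    simpa [Function.comp_def] using (Complex.continuous_conj.tendsto 1).comp hlim
  have hLlim : Tendsto (fun k => (1 - normSq z) * normSq (1 - (starRingEnd ℂ) (f (ζ k)) * f z))
      atTop (nhds ((1 - normSq z) * normSq (1 - f z))) := by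
    have h2 : Tendsto (fun k => (1:ℂ) - (starRingEnd ℂ) (f (ζ k)) * f z) atTop
        (nhds (1 - f z)) := by
      have := (tendsto_const_nhds (x := (1:ℂ))).sub (hconjy.mul (tendsto_const_nhds (x := f z)))
      simpa using this
    have h3 := (Complex.continuous_normSq.tendsto (1 - f z)).comp h2
    exact (tendsto_const_nhds (x := 1 - normSq z)).mul h3
  have hRlim : Tendsto (fun k => (1 - normSq (f z)) * normSq (1 - (starRingEnd ℂ) (ζ k) * z)
      * max (r k) 1) atTop (nhds ((1 - normSq (f z)) * normSq (1 - z) * 1)) := by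
    have h2 : Tendsto (fun k => (1:ℂ) - (starRingEnd ℂ) (ζ k) * z) atTop (nhds (1 - z)) := by
      have := (tendsto_const_nhds (x := (1:ℂ))).sub (hconjw.mul (tendsto_const_nhds (x := z)))
      simpa using this
    have h3 := (Complex.continuous_normSq.tendsto (1 - z)).comp h2
    exact ((tendsto_const_nhds (x := 1 - normSq (f z))).mul h3).mul hmax
  have hfin := le_of_tendsto_of_tendsto' hLlim hRlim hsp
  nlinarith [hfin]

private lemma halfplane_alg {z w : ℂ} (hz : normSq z < 1) (hw : normSq w < 1)
    (hJ : normSq (1 - w) * (1 - normSq z) ≤ normSq (1 - z) * (1 - normSq w)) :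
    0 ≤ ((w - z) / (z - 1) ^ 2).re := by
  have hz1 : (1 : ℂ) - z ≠ 0 := by
    intro h
    have : z = 1 := by linear_combination -h
    rw [this] at hz; simp at hz
  have hw1 : (1 : ℂ) - w ≠ 0 := by
    intro h
    have : w = 1 := by linear_combination -h
    rw [this] at hw; simp at hw
  have hz1p : 0 < normSq (1 - z) := normSq_pos.2 hz1
  have hw1p : 0 < normSq (1 - w) := normSq_pos.2 hw1
  set h : ℂ := (1 + w) / (1 - w) - (1 + z) / (1 - z) with hh
  -- real part of h is nonnegative
  have rew : ∀ x : ℂ, (1 : ℂ) - x ≠ 0 → ((1 + x) / (1 - x)).re = (1 - normSq x) / normSq (1 - x) := by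
    intro x hx
    rw [Complex.div_re]
    rw [← add_div]
    congr 1
    simp only [Complex.normSq_apply, Complex.add_re, Complex.add_im, Complex.sub_re,
      Complex.sub_im, Complex.one_re, Complex.one_im]
    ring
  have hre : 0 ≤ h.re := by
    rw [hh, Complex.sub_re, rew w hw1, rew z hz1]
    rw [sub_nonneg, div_le_div_iff₀ hz1p hw1p]
    nlinarith [hJ]
  -- the denominator 2 + h * (1 - z)
  have hv : (2 : ℂ) + h * (1 - z) = 2 * (1 - z) / (1 - w) := by
    rw [hh]
    field_simp
    ring
  have hvne : (2 : ℂ) + h * (1 - z) ≠ 0 := by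
    rw [hv]
    exact div_ne_zero (mul_ne_zero two_ne_zero hz1) hw1
  have hz1' : z - 1 ≠ 0 := fun hq => hz1 (by linear_combination -hq)
  have hgid : (w - z) / (z - 1) ^ 2 = h / (2 + h * (1 - z)) := by
    rw [hv, hh, div_div_eq_mul_div]
    field_simp [hz1, hw1, hz1']
    ring
  rw [hgid, Complex.div_re]
  rw [← add_div]
  have hnum : h.re * (2 + h * (1 - z)).re + h.im * (2 + h * (1 - z)).im
      = 2 * h.re + normSq h * (1 - z.re) := by
    simp only [Complex.normSq_apply, Complex.add_re, Complex.add_im, Complex.mul_re,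
      Complex.mul_im, Complex.sub_re, Complex.sub_im, Complex.one_re, Complex.one_im,
      Complex.re_ofNat, Complex.im_ofNat]
    ring
  rw [hnum]
  have hzre : z.re < 1 := by
    nlinarith [Complex.normSq_apply z, sq_nonneg z.im, sq_nonneg z.re, hz]
  have hden : 0 < normSq (2 + h * (1 - z)) := normSq_pos.2 hvne
  apply div_nonneg _ (le_of_lt hden)
  nlinarith [normSq_nonneg h]


end BKAux


/-- **Lemma 2.1 (i).**  Let `f : Δ → Δ` be holomorphic and suppose
`f(ζ_k) = ζ_k + O(|ζ_k - 1|³)` along a sequence `ζ_k → 1` non-tangentially.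
Then `Re((f(ζ) - ζ)/(ζ - 1)²) ≥ 0` on `Δ`. -/
theorem burns_krantz_halfplane_positivity
    (f : ℂ → ℂ) (hf : DifferentiableOn ℂ f unitDisc) (hmap : MapsTo f unitDisc unitDisc)
    (ζ : ℕ → ℂ) (hζ : ∀ k, ζ k ∈ unitDisc)
    (hlim : Tendsto ζ atTop (nhds 1))
    (β : ℝ) (hβ : 1 < β) (hnt : ∀ᶠ k in atTop, ζ k ∈ stolzRegion β)
    (C : ℝ) (hC : ∀ k, ‖f (ζ k) - ζ k‖ ≤ C * ‖ζ k - 1‖ ^ 3) :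
    ∀ z ∈ unitDisc, 0 ≤ ((f z - z) / (z - 1) ^ 2).re := by
  intro z hz
  exact halfplane_alg (normSq_lt_one_of_mem hz) (normSq_lt_one_of_mem (hmap hz))
    (julia_lemma hf hmap ζ hζ hlim β hβ hnt C hC hz)
end

section
/- Let Ω ⊂ ℂⁿ (n > 1) be a bounded strongly linearly convex domain with C³-smooth boundary, φ a complex geodesic of Ω, and ρ = φ∘ϱ ∈ O(Ω, Ω) the Lempert retraction associated to φ (ϱ the Lempert left inverse). Then for every ζ ∈ ∂Δ and every v ∈ ℂⁿ, the differential of ϱ = φ^{−1}∘ρ at the boundary point φ(ζ) satisfies d(φ^{−1}∘ρ)_{φ(ζ)}(v) = ⟨v, ν∘φ(ζ)⟩ / ⟨φ'(ζ), ν∘φ(ζ)⟩, where ν denotes the unit outward normal vector field of ∂Ω. -/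
open Complex Metric Set Filter
open scoped ComplexOrder

section AuxProofs

open scoped Topology

lemma frontier_r_eq_zero {n : ℕ} {Ω : Set (Cn n)} {r : Cn n → ℝ}
    (hrc : Continuous r) (hΩr : Ω = {z | r z < 0}) {p : Cn n} (hp : p ∈ frontier Ω) :
    r p = 0 := by
  have hΩo : IsOpen Ω := hΩr ▸ isOpen_lt hrc continuous_const
  rw [hΩo.frontier_eq] at hp
  have hle : r p ≤ 0 := by
    have hsub : closure Ω ⊆ {z | r z ≤ 0} :=
      closure_minimal (by rw [hΩr]; intro z hz; exact le_of_lt (show r z < 0 from hz))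
        (isClosed_le hrc continuous_const)
    exact hsub hp.1
  have hge : ¬ r p < 0 := fun h => hp.2 (by rw [hΩr]; exact h)
  linarith [not_lt.mp hge]

set_option maxHeartbeats 1000000 in
lemma exists_frontier_point_near {n : ℕ} {Ω : Set (Cn n)} {r : Cn n → ℝ}
    (hr : ContDiff ℝ ((3:ℕ) : ℕ∞) r) (hΩr : Ω = {z | r z < 0}) {p : Cn n} (hp : p ∈ frontier Ω)
    {w : Cn n} (hw : fderiv ℝ r p w = 1) {v : Cn n} (hv : fderiv ℝ r p v = 0)
    {ε : ℝ} (hε : 0 < ε) (hε1 : ε ≤ 1) :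
    ∃ δ > 0, ∀ t : ℝ, 0 < t → t < δ →
      ∃ s : ℝ, |s| ≤ ε * t ∧ p + (t • v + s • w) ∈ frontier Ω := by
  have hrc : Continuous r := hr.continuous
  have hΩo : IsOpen Ω := hΩr ▸ isOpen_lt hrc continuous_const
  have hrp : r p = 0 := frontier_r_eq_zero hrc hΩr hp
  set L := fderiv ℝ r p with hLdef
  have hstrict : HasStrictFDerivAt r L p :=
    (hr.contDiffAt).hasStrictFDerivAt (by norm_num)
  set c := ε / (2 * (‖v‖ + ‖w‖ + 1)) with hc
  have hcpos : 0 < c := div_pos hε (by positivity)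
  have hcw : c * ‖w‖ ≤ 1 / 2 := by
    rw [hc, div_mul_eq_mul_div, div_le_div_iff₀ (by positivity) (by norm_num)]
    nlinarith [norm_nonneg v, norm_nonneg w]
  have hcv : c * ‖v‖ < ε / 2 := by
    rw [hc, div_mul_eq_mul_div, div_lt_div_iff₀ (by positivity) (by norm_num)]
    nlinarith [norm_nonneg v, norm_nonneg w]
  obtain ⟨δ₀, hδ₀pos, hδ₀⟩ := Metric.eventually_nhds_iff.mp ((hstrict.isLittleO).def hcpos)
  have Est : ∀ x y : Cn n, dist x p < δ₀ → dist y p < δ₀ →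
      |r x - r y - L (x - y)| ≤ c * ‖x - y‖ := by
    intro x y hx hy
    have := hδ₀ (y := (x, y)) (by rw [Prod.dist_eq]; exact max_lt hx hy)
    simpa using this
  set A := ‖v‖ + 2 * ‖w‖ + 1 with hA
  have hApos : 0 < A := by positivity
  refine ⟨δ₀ / A, by positivity, ?_⟩
  intro t ht htδ
  have hεt : 0 < ε * t := by positivity
  have hball : ∀ s : ℝ, |s| ≤ 2 * (ε * t) → dist (p + (t • v + s • w)) p < δ₀ := by
    intro s hs
    rw [dist_eq_norm, add_sub_cancel_left]
    calc ‖t • v + s • w‖ ≤ ‖t • v‖ + ‖s • w‖ := norm_add_le _ _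
      _ = t * ‖v‖ + |s| * ‖w‖ := by
          rw [norm_smul, norm_smul, Real.norm_eq_abs, Real.norm_eq_abs, _root_.abs_of_pos ht]
      _ ≤ t * ‖v‖ + (2 * (ε * t)) * ‖w‖ := by
          have := mul_le_mul_of_nonneg_right hs (norm_nonneg w); linarith
      _ ≤ t * A := by
          rw [hA]
          have h1 : ε * (t * ‖w‖) ≤ 1 * (t * ‖w‖) :=
            mul_le_mul_of_nonneg_right hε1 (by positivity)
          nlinarith [norm_nonneg w, norm_nonneg v]
      _ < (δ₀ / A) * A := mul_lt_mul_of_pos_right htδ hApos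
      _ = δ₀ := div_mul_cancel₀ _ (ne_of_gt hApos)
  set g : ℝ → ℝ := fun s => r (p + (t • v + s • w)) with hgdef
  have hdiffpt : ∀ s₁ s₂ : ℝ,
      (p + (t • v + s₂ • w)) - (p + (t • v + s₁ • w)) = (s₂ - s₁) • w := by
    intro s₁ s₂; module
  have hmono : ∀ s₁ s₂ : ℝ, |s₁| ≤ 2 * (ε * t) → |s₂| ≤ 2 * (ε * t) → s₁ ≤ s₂ →
      (s₂ - s₁) / 2 ≤ g s₂ - g s₁ := by
    intro s₁ s₂ h1 h2 h12
    show (s₂ - s₁) / 2 ≤ r (p + (t • v + s₂ • w)) - r (p + (t • v + s₁ • w))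
    have hE := Est _ _ (hball s₂ h2) (hball s₁ h1)
    rw [hdiffpt s₁ s₂] at hE
    rw [map_smul, smul_eq_mul, hw, mul_one, norm_smul, Real.norm_eq_abs,
      _root_.abs_of_nonneg (by linarith : (0:ℝ) ≤ s₂ - s₁)] at hE
    have habs := (abs_le.mp hE).1
    nlinarith [hcw, habs]
  have hg0' : |r (p + t • v)| ≤ c * (t * ‖v‖) := by
    have hb : dist (p + t • v) p < δ₀ := by
      have := hball 0 (by rw [abs_zero]; linarith)
      simpa using this
    have hE := Est (p + t • v) p hb (by simpa using hδ₀pos)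
    rw [add_sub_cancel_left, hrp, sub_zero, map_smul, smul_eq_mul, hv, mul_zero, sub_zero,
      norm_smul, Real.norm_eq_abs, _root_.abs_of_pos ht] at hE
    exact hE
  have hg0 : |g 0| ≤ c * (t * ‖v‖) := by
    have h00 : g 0 = r (p + t • v) := by simp [hgdef]
    rw [h00]; exact hg0'
  have hgpos : 0 < g (ε * t) := by
    have h1 := hmono 0 (ε * t) (by rw [abs_zero]; linarith)
      (by rw [_root_.abs_of_pos hεt]; linarith) (le_of_lt hεt)
    have h0 := abs_le.mp hg0
    nlinarith [hcv]
  have hgneg : g (-(ε * t)) < 0 := by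
    have h1 := hmono (-(ε * t)) 0 (by rw [abs_neg, _root_.abs_of_pos hεt]; linarith)
      (by rw [abs_zero]; linarith) (by linarith)
    have h0 := abs_le.mp hg0
    nlinarith [hcv]
  have hgc : ContinuousOn g (Icc (-(ε * t)) (ε * t)) :=
    (hrc.comp (continuous_const.add (continuous_const.add
      (continuous_id.smul continuous_const)))).continuousOn
  obtain ⟨s, hsmem, hgs⟩ := intermediate_value_Icc (by linarith) hgc
    (⟨le_of_lt hgneg, le_of_lt hgpos⟩ : (0:ℝ) ∈ Icc (g (-(ε * t))) (g (ε * t)))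
  have hsabs : |s| ≤ ε * t := abs_le.mpr ⟨hsmem.1, hsmem.2⟩
  refine ⟨s, hsabs, ?_⟩
  rw [hΩo.frontier_eq]
  constructor
  · rw [Metric.mem_closure_iff]
    intro ρ hρ
    set σ := min (ε * t) (ρ / (‖w‖ + 1)) with hσ
    have hσ1 : σ ≤ ε * t := min_le_left _ _
    have hσ2 : σ ≤ ρ / (‖w‖ + 1) := min_le_right _ _
    have hσpos : 0 < σ := lt_min hεt (by positivity)
    have hsσ : |s - σ| ≤ 2 * (ε * t) := by
      have hs' := abs_le.mp hsabs
      rw [abs_le]; constructor <;> linarith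
    refine ⟨p + (t • v + (s - σ) • w), ?_, ?_⟩
    · rw [hΩr]
      show g (s - σ) < 0
      have hmm := hmono (s - σ) s hsσ (by linarith [abs_le.mp hsabs, hεt]) (by linarith)
      rw [hgs] at hmm
      linarith
    · rw [dist_eq_norm]
      have he1 : (p + (t • v + s • w)) - (p + (t • v + (s - σ) • w)) = (s - (s - σ)) • w :=
        hdiffpt (s - σ) s
      rw [he1]
      have he2 : (s - (s - σ)) = σ := by ring
      rw [he2, norm_smul, Real.norm_eq_abs, _root_.abs_of_pos hσpos]
      have hwn : σ * ‖w‖ ≤ ρ / (‖w‖ + 1) * ‖w‖ :=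
        mul_le_mul_of_nonneg_right hσ2 (norm_nonneg w)
      have hlt : ρ / (‖w‖ + 1) * ‖w‖ < ρ := by
        rw [div_mul_eq_mul_div, div_lt_iff₀ (by positivity)]
        nlinarith [norm_nonneg w]
      linarith
  · intro hmem
    rw [hΩr] at hmem
    have hlt : g s < 0 := hmem
    rw [hgs] at hlt
    exact absurd hlt (by norm_num)

set_option maxHeartbeats 1000000 in
lemma ker_subset_tangentCone {n : ℕ} {Ω : Set (Cn n)} {r : Cn n → ℝ}
    (hr : ContDiff ℝ ((3:ℕ) : ℕ∞) r) (hΩr : Ω = {z | r z < 0}) {p : Cn n} (hp : p ∈ frontier Ω)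
    {w : Cn n} (hw : fderiv ℝ r p w = 1) {v : Cn n} (hv : fderiv ℝ r p v = 0) :
    v ∈ tangentConeAt ℝ (frontier Ω) p := by
  have H : ∀ m : ℕ, ∃ ts : ℝ × ℝ, 0 < ts.1 ∧ ts.1 ≤ 1 / ((m : ℝ) + 1) ∧
      |ts.2| ≤ 1 / ((m : ℝ) + 1) * ts.1 ∧ p + (ts.1 • v + ts.2 • w) ∈ frontier Ω := by
    intro m
    have hεm : 0 < 1 / ((m : ℝ) + 1) := by positivity
    obtain ⟨δ, hδ, hkey⟩ := exists_frontier_point_near hr hΩr hp hw hv hεm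
      (by rw [div_le_one (by positivity)]; linarith [(Nat.cast_nonneg m : (0:ℝ) ≤ (m:ℝ))])
    obtain ⟨s, hs, hmem⟩ := hkey (min (δ / 2) (1 / ((m : ℝ) + 1)))
      (lt_min (by linarith) hεm)
      (lt_of_le_of_lt (min_le_left _ _) (by linarith))
    exact ⟨(min (δ / 2) (1 / ((m : ℝ) + 1)), s), lt_min (by linarith) hεm,
      min_le_right _ _, hs, hmem⟩
  choose TS hT1 hT2 hS hmem using H
  refine (fun (hc : Tendsto (fun m : ℕ => ‖((TS m).1)⁻¹‖) atTop atTop)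
      (hd : Tendsto (fun m : ℕ => ((TS m).1)⁻¹ • ((TS m).1 • v + (TS m).2 • w)) atTop (𝓝 v)) =>
    mem_tangentConeAt_of_seq atTop (fun m => ((TS m).1)⁻¹) (fun m => (TS m).1 • v + (TS m).2 • w)
      (tangentConeAt.lim_zero atTop hc hd) (Eventually.of_forall hmem) hd) ?_ ?_
  · have hb : ∀ m : ℕ, (m : ℝ) + 1 ≤ ‖((TS m).1)⁻¹‖ := by
      intro m
      rw [Real.norm_eq_abs, _root_.abs_of_pos (inv_pos.mpr (hT1 m))]
      have h1 : (1 / ((m : ℝ) + 1))⁻¹ ≤ ((TS m).1)⁻¹ :=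
        inv_anti₀ (hT1 m) (hT2 m)
      rwa [one_div, inv_inv] at h1
    exact tendsto_atTop_mono hb
      (tendsto_atTop_add_const_right _ 1 tendsto_natCast_atTop_atTop)
  · have heq : ∀ m : ℕ, ((TS m).1)⁻¹ • ((TS m).1 • v + (TS m).2 • w)
        = v + (((TS m).1)⁻¹ * (TS m).2) • w := by
      intro m
      rw [smul_add, smul_smul, smul_smul, inv_mul_cancel₀ (ne_of_gt (hT1 m)), one_smul]
    have hlim : Tendsto (fun m : ℕ => ((TS m).1)⁻¹ * (TS m).2) atTop (𝓝 0) := by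
      apply squeeze_zero_norm (fun m => ?_) tendsto_one_div_add_atTop_nhds_zero_nat
      rw [norm_mul, norm_inv, Real.norm_eq_abs, Real.norm_eq_abs,
        _root_.abs_of_pos (hT1 m)]
      have h1 : ((TS m).1)⁻¹ * |(TS m).2| ≤ ((TS m).1)⁻¹ * (1 / ((m : ℝ) + 1) * (TS m).1) :=
        mul_le_mul_of_nonneg_left (hS m) (le_of_lt (inv_pos.mpr (hT1 m)))
      have h2 : ((TS m).1)⁻¹ * (1 / ((m : ℝ) + 1) * (TS m).1) = 1 / ((m : ℝ) + 1) := by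
        rw [mul_comm (1 / ((m : ℝ) + 1)) ((TS m).1), ← mul_assoc,
          inv_mul_cancel₀ (ne_of_gt (hT1 m)), one_mul]
      linarith
    have h2 : Tendsto (fun m : ℕ => v + (((TS m).1)⁻¹ * (TS m).2) • w) atTop
        (𝓝 (v + (0 : ℝ) • w)) := tendsto_const_nhds.add (hlim.smul_const w)
    have h3 := h2.congr (fun m => (heq m).symm)
    simpa using h3


lemma frontier_of_normal {n : ℕ} {Ω : Set (Cn n)} (hΩo : IsOpen Ω) {p ν : Cn n}
    (h : IsUnitOutwardNormalAt Ω p ν) : p ∈ frontier Ω := by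
  obtain ⟨hν1, hT, ε, hε, hside⟩ := h
  rw [hΩo.frontier_eq]
  constructor
  · rw [Metric.mem_closure_iff]
    intro ρ hρ
    have ht : 0 < min (ε / 2) (ρ / 2) := lt_min (by linarith) (by linarith)
    refine ⟨p - min (ε / 2) (ρ / 2) • ν, (hside _ ht (lt_of_le_of_lt (min_le_left _ _) (by linarith))).2, ?_⟩
    rw [dist_eq_norm, sub_sub_cancel, norm_smul, Real.norm_eq_abs, _root_.abs_of_pos ht, hν1,
      mul_one]
    exact lt_of_le_of_lt (min_le_right _ _) (by linarith)
  · intro hpΩ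
    obtain ⟨ρ, hρ, hball⟩ := Metric.isOpen_iff.mp hΩo p hpΩ
    have ht : 0 < min (ε / 2) (ρ / 2) := lt_min (by linarith) (by linarith)
    refine (hside _ ht (lt_of_le_of_lt (min_le_left _ _) (by linarith))).1 ?_
    apply subset_closure
    apply hball
    rw [mem_ball, dist_eq_norm, add_sub_cancel_left, norm_smul, Real.norm_eq_abs,
      _root_.abs_of_pos ht, hν1, mul_one]
    exact lt_of_le_of_lt (min_le_right _ _) (by linarith)

lemma herm_self_re {n : ℕ} (ν : Cn n) : (herm ν ν).re = ‖ν‖ ^ 2 := by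
  rw [EuclideanSpace.norm_eq, Real.sq_sqrt (by positivity)]
  rw [herm, Complex.re_sum]
  refine Finset.sum_congr rfl (fun j _ => ?_)
  rw [Complex.mul_conj, Complex.ofReal_re, ← Complex.sq_norm]

lemma fderiv_nonneg_outward {n : ℕ} {Ω : Set (Cn n)} {r : Cn n → ℝ}
    (hr : ContDiff ℝ ((3:ℕ) : ℕ∞) r) (hΩr : Ω = {z | r z < 0}) {p : Cn n} (hp : p ∈ frontier Ω)
    {ν : Cn n} (hν : IsUnitOutwardNormalAt Ω p ν) :
    0 ≤ fderiv ℝ r p ν := by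
  have hrc : Continuous r := hr.continuous
  have hrp : r p = 0 := frontier_r_eq_zero hrc hΩr hp
  have hdiff : DifferentiableAt ℝ r p := (hr.differentiable (by norm_num)).differentiableAt
  have h1 : HasDerivAt (fun t : ℝ => p + t • ν) ν 0 := by
    simpa using ((hasDerivAt_id (0 : ℝ)).smul_const ν).const_add p
  have hfd : HasFDerivAt r (fderiv ℝ r p) ((fun t : ℝ => p + t • ν) 0) := by
    simpa using hdiff.hasFDerivAt
  have hline := hfd.comp_hasDerivAt 0 h1
  rw [hasDerivAt_iff_tendsto_slope] at hline
  have hline' := hline.mono_left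
    (nhdsWithin_mono 0 (fun x (hx : x ∈ Ioi (0:ℝ)) => (mem_compl_singleton_iff).mpr (ne_of_gt hx)))
  refine ge_of_tendsto hline' ?_
  obtain ⟨ε, hε, hside⟩ := hν.2.2
  filter_upwards [Ioo_mem_nhdsGT_of_mem (⟨le_refl 0, hε⟩ : (0:ℝ) ∈ Ico 0 ε)] with t ht
  have hout : p + t • ν ∉ Ω := fun hmem => (hside t ht.1 ht.2).1 (subset_closure hmem)
  have hge : 0 ≤ r (p + t • ν) := by
    by_contra hcon
    exact hout (by rw [hΩr]; exact lt_of_not_ge hcon)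
  have : slope (r ∘ fun t : ℝ => p + t • ν) 0 t
      = t⁻¹ * (r (p + t • ν) - r p) := by
    rw [slope_def_field]
    simp [div_eq_inv_mul]
  rw [this, hrp, sub_zero]
  exact mul_nonneg (inv_nonneg.mpr ht.1.le) hge

lemma herm_sub_smul {n : ℕ} (u w ν : Cn n) (c : ℝ) :
    herm (u - c • w) ν = herm u ν - (c : ℂ) * herm w ν := by
  simp only [herm, Finset.mul_sum, ← Finset.sum_sub_distrib]
  refine Finset.sum_congr rfl (fun j _ => ?_)
  have : (u - c • w) j = u j - (c : ℂ) * w j := by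
    simp [Complex.real_smul]
  rw [this]
  ring

lemma normal_rep {n : ℕ} {Ω : Set (Cn n)} {r : Cn n → ℝ}
    (hr : ContDiff ℝ ((3:ℕ) : ℕ∞) r) (hΩr : Ω = {z | r z < 0}) {p : Cn n} (hp : p ∈ frontier Ω)
    {w : Cn n} (hw : fderiv ℝ r p w = 1)
    {ν : Cn n} (hν : IsUnitOutwardNormalAt Ω p ν) :
    ∃ lam : ℝ, 0 < lam ∧ ∀ u : Cn n, (herm u ν).re = lam * fderiv ℝ r p u := by
  set L := fderiv ℝ r p with hL
  have hlin : ∀ u : Cn n, (herm u ν).re = L u * (herm w ν).re := by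
    intro u
    have hker : L (u - (L u) • w) = 0 := by
      rw [map_sub, map_smul, smul_eq_mul, hw, mul_one, sub_self]
    have htan := hν.2.1 _ (ker_subset_tangentCone hr hΩr hp hw hker)
    rw [herm_sub_smul] at htan
    have : (herm u ν - (L u : ℂ) * herm w ν).re
        = (herm u ν).re - L u * (herm w ν).re := by
      simp [Complex.sub_re, Complex.re_ofReal_mul]
    rw [this] at htan
    linarith
  have hself : (herm ν ν).re = 1 := by
    rw [herm_self_re, hν.1]; norm_num
  have hone : L ν * (herm w ν).re = 1 := by rw [← hlin ν, hself]
  have hLν : 0 ≤ L ν := fderiv_nonneg_outward hr hΩr hp hν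
  have hlam : 0 < (herm w ν).re := by
    rcases lt_trichotomy ((herm w ν).re) 0 with h | h | h
    · nlinarith
    · rw [h, mul_zero] at hone; norm_num at hone
    · exact h
  exact ⟨(herm w ν).re, hlam, fun u => by rw [hlin u, mul_comm]⟩

lemma herm_single_one {n : ℕ} (ν : Cn n) (j : Fin n) :
    herm (EuclideanSpace.single j (1 : ℂ)) ν = (starRingEnd ℂ) (ν j) := by
  rw [herm]
  rw [Finset.sum_eq_single j]
  · simp [EuclideanSpace.single_apply]
  · intro k _ hk
    simp [EuclideanSpace.single_apply, hk]
  · intro h; exact absurd (Finset.mem_univ j) h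

lemma herm_single_I {n : ℕ} (ν : Cn n) (j : Fin n) :
    herm (EuclideanSpace.single j (Complex.I)) ν = Complex.I * (starRingEnd ℂ) (ν j) := by
  rw [herm]
  rw [Finset.sum_eq_single j]
  · simp [EuclideanSpace.single_apply]
  · intro k _ hk
    simp [EuclideanSpace.single_apply, hk]
  · intro h; exact absurd (Finset.mem_univ j) h

lemma normal_unique {n : ℕ} {Ω : Set (Cn n)} {r : Cn n → ℝ}
    (hr : ContDiff ℝ ((3:ℕ) : ℕ∞) r) (hΩr : Ω = {z | r z < 0})
    (hreg : ∀ q ∈ frontier Ω, fderiv ℝ r q ≠ 0)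
    {p : Cn n} (hp : p ∈ frontier Ω)
    {ν ν' : Cn n} (h1 : IsUnitOutwardNormalAt Ω p ν) (h2 : IsUnitOutwardNormalAt Ω p ν') :
    ν = ν' := by
  set L := fderiv ℝ r p with hL
  obtain ⟨u₀, hu₀⟩ : ∃ u₀, L u₀ ≠ 0 := by
    by_contra hcon
    push_neg at hcon
    exact hreg p hp (ContinuousLinearMap.ext fun u => by rw [hcon u]; rfl)
  set w := (L u₀)⁻¹ • u₀ with hwdef
  have hw : L w = 1 := by
    rw [hwdef, map_smul, smul_eq_mul, inv_mul_cancel₀ hu₀]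
  obtain ⟨lam, hlam, hrep⟩ := normal_rep hr hΩr hp hw h1
  obtain ⟨lam', hlam', hrep'⟩ := normal_rep hr hΩr hp hw h2
  set k := lam / lam' with hk
  have hkpos : 0 < k := div_pos hlam hlam'
  have hcomp : ∀ u : Cn n, (herm u ν).re = k * (herm u ν').re := by
    intro u
    rw [hrep u, hrep' u, hk]
    field_simp
  have hre : ∀ j : Fin n, (ν j).re = k * (ν' j).re := by
    intro j
    have := hcomp (EuclideanSpace.single j (1 : ℂ))
    rwa [herm_single_one, herm_single_one, Complex.conj_re, Complex.conj_re] at this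
  have him : ∀ j : Fin n, (ν j).im = k * (ν' j).im := by
    intro j
    have := hcomp (EuclideanSpace.single j (Complex.I))
    have he : ∀ z : ℂ, (Complex.I * (starRingEnd ℂ) z).re = z.im := by
      intro z
      simp [Complex.mul_re]
    rwa [herm_single_I, herm_single_I, he, he] at this
  have hsmul : ν = k • ν' := by
    ext j
    have : (k • ν') j = (k : ℂ) * ν' j := by simp [Complex.real_smul]
    rw [this]
    apply Complex.ext
    · rw [Complex.re_ofReal_mul]; exact hre j
    · rw [Complex.im_ofReal_mul]; exact him j
  have hnorm : (1 : ℝ) = k * 1 := by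
    calc (1 : ℝ) = ‖ν‖ := h1.1.symm
      _ = ‖k • ν'‖ := by rw [hsmul]
      _ = |k| * ‖ν'‖ := by rw [norm_smul, Real.norm_eq_abs]
      _ = k * 1 := by rw [_root_.abs_of_pos hkpos, h2.1]
  have : k = 1 := by linarith
  rw [hsmul, this, one_smul]

set_option maxHeartbeats 1000000 in
set_option synthInstance.maxHeartbeats 400000 in
lemma interior_formula {n : ℕ} {Ω : Set (Cn n)} (hΩo : IsOpen Ω)
    {φ φd φs : ℂ → Cn n} {ϱ : Cn n → ℂ} {D : Cn n → Cn n →L[ℂ] ℂ}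
    (hmap : Set.MapsTo φ unitDisc Ω)
    (hφder : ∀ ζ ∈ unitDisc, HasDerivAt φ (φd ζ) ζ)
    (hφs : DifferentiableOn ℂ φs unitDisc)
    (hnorm : ∀ ζ ∈ unitDisc, ∑ j, φd ζ j * φs ζ j = 1)
    (hleft : ∀ ζ ∈ unitDisc, ϱ (φ ζ) = ζ)
    (horth : ∀ z ∈ Ω, ∑ j, (z j - φ (ϱ z) j) * φs (ϱ z) j = 0)
    (hD : ∀ q ∈ closure Ω, HasFDerivWithinAt ϱ (D q) (closure Ω) q)
    {w : ℂ} (hw : w ∈ unitDisc) (v : Cn n) :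
    D (φ w) v = ∑ j, v j * φs w j := by
  have hq : φ w ∈ Ω := hmap hw
  have hϱ' : HasFDerivAt ϱ (D (φ w)) (φ w) :=
    (hD (φ w) (subset_closure hq)).hasFDerivAt
      (mem_nhds_iff.mpr ⟨Ω, subset_closure, hΩo, hq⟩)
  have hϱw : ϱ (φ w) = w := hleft w hw
  have hφ' : HasDerivAt φ (φd w) (ϱ (φ w)) := by rw [hϱw]; exact hφder w hw
  have hφF : HasFDerivAt φ ((1 : ℂ →L[ℂ] ℂ).smulRight (φd w)) (ϱ (φ w)) := hφ'.hasFDerivAt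
  have hcomp : HasFDerivAt (fun z => φ (ϱ z))
      (((1 : ℂ →L[ℂ] ℂ).smulRight (φd w)).comp (D (φ w))) (φ w) := hφF.comp (φ w) hϱ'
  have hφsdiff : DifferentiableAt ℂ φs (ϱ (φ w)) := by
    rw [hϱw]
    exact (hφs w hw).differentiableAt (isOpen_ball.mem_nhds hw)
  have hBdiff : DifferentiableAt ℂ (fun z => φs (ϱ z)) (φ w) :=
    hφsdiff.comp (φ w) hϱ'.differentiableAt
  set B' := fderiv ℂ (fun z => φs (ϱ z)) (φ w) with hB'
  have hBj : ∀ j : Fin n, HasFDerivAt (fun z => φs (ϱ z) j)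
      ((EuclideanSpace.proj j : Cn n →L[ℂ] ℂ).comp B') (φ w) := fun j =>
    ((EuclideanSpace.proj j : Cn n →L[ℂ] ℂ).hasFDerivAt).comp (φ w) hBdiff.hasFDerivAt
  have hAj : ∀ j : Fin n, HasFDerivAt (fun z : Cn n => z j - φ (ϱ z) j)
      ((EuclideanSpace.proj j : Cn n →L[ℂ] ℂ) - (EuclideanSpace.proj j : Cn n →L[ℂ] ℂ).comp
        (((1 : ℂ →L[ℂ] ℂ).smulRight (φd w)).comp (D (φ w)))) (φ w) := fun j =>
    ((EuclideanSpace.proj j : Cn n →L[ℂ] ℂ).hasFDerivAt).sub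
      (((EuclideanSpace.proj j : Cn n →L[ℂ] ℂ).hasFDerivAt).comp (φ w) hcomp)
  have hG : HasFDerivAt (fun z : Cn n => ∑ j, (z j - φ (ϱ z) j) * φs (ϱ z) j)
      (∑ j, ((φ w j - φ (ϱ (φ w)) j) • ((EuclideanSpace.proj j : Cn n →L[ℂ] ℂ).comp B')
        + φs (ϱ (φ w)) j • ((EuclideanSpace.proj j : Cn n →L[ℂ] ℂ)
          - (EuclideanSpace.proj j : Cn n →L[ℂ] ℂ).comp
            (((1 : ℂ →L[ℂ] ℂ).smulRight (φd w)).comp (D (φ w)))))) (φ w) :=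
    HasFDerivAt.fun_sum (fun j _ => (hAj j).mul (hBj j))
  have hG0 : HasFDerivAt (fun z : Cn n => ∑ j, (z j - φ (ϱ z) j) * φs (ϱ z) j) (0 : Cn n →L[ℂ] ℂ) (φ w) := by
    have hev : (fun z : Cn n => ∑ j, (z j - φ (ϱ z) j) * φs (ϱ z) j)
        =ᶠ[nhds (φ w)] (fun _ => (0 : ℂ)) := by
      filter_upwards [hΩo.mem_nhds hq] with z hz
      exact horth z hz
    exact (Filter.EventuallyEq.hasFDerivAt_iff hev).mpr (hasFDerivAt_const 0 (φ w))
  have hzero := hG.unique hG0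
  have hv := congrArg (fun T : Cn n →L[ℂ] ℂ => T v) hzero
  simp only [ContinuousLinearMap.coe_sum', Finset.sum_apply, ContinuousLinearMap.add_apply,
    ContinuousLinearMap.coe_smul', Pi.smul_apply, ContinuousLinearMap.comp_apply,
    ContinuousLinearMap.sub_apply, ContinuousLinearMap.smulRight_apply,
    ContinuousLinearMap.one_apply, PiLp.proj_apply, ContinuousLinearMap.zero_apply,
    hϱw, sub_self, zero_smul, smul_eq_mul, zero_add, zero_mul, PiLp.smul_apply] at hv
  -- hv : ∑ j, φs w j * (v j - D (φ w) v • φd w j ...) = 0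
  have hexp : ∑ j, φs w j * (v j - D (φ w) v * φd w j)
      = ∑ j, v j * φs w j - (D (φ w) v) * ∑ j, φd w j * φs w j := by
    rw [Finset.mul_sum, ← Finset.sum_sub_distrib]
    refine Finset.sum_congr rfl (fun j _ => ?_)
    ring
  rw [hexp, hnorm w hw, mul_one] at hv
  exact (sub_eq_zero.mp hv).symm


end AuxProofs

/-- **Proposition 4.1 (i).**  Let `Ω ⊂ ℂⁿ` (`n > 1`) be a bounded strongly linearly
convex domain with `C³`-smooth boundary, `φ` a complex geodesic with Lempert left
inverse `ϱ = φ⁻¹∘ρ`.  For every `ζ ∈ ∂Δ` and `v ∈ ℂⁿ` the boundary differential of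
`ϱ` at `φ(ζ)` is `d(φ⁻¹∘ρ)_{φ(ζ)}(v) = ⟨v, ν∘φ(ζ)⟩ / ⟨φ'(ζ), ν∘φ(ζ)⟩`. -/
theorem lempert_left_inverse_boundary_differential
    {n : ℕ} (hn : 1 < n) (Ω : Set (Cn n)) (hΩ : IsBoundedSLCDomain 3 Ω)
    (φ φd φs : ℂ → Cn n) (hpkg : GeodesicPkg Ω φ φd φs)
    (ϱ : Cn n → ℂ) (hϱ : IsLempertLeftInverse Ω φ φs ϱ)
    (D : Cn n → Cn n →L[ℂ] ℂ)
    (hD : ∀ q ∈ closure Ω, HasFDerivWithinAt ϱ (D q) (closure Ω) q)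
    (hDc : ContinuousOn D (closure Ω)) :
    ∀ ζ ∈ Metric.sphere (0 : ℂ) 1, ∀ ν : Cn n, IsUnitOutwardNormalAt Ω (φ ζ) ν →
      ∀ v : Cn n, D (φ ζ) v = herm v ν / herm (φd ζ) ν := by
  obtain ⟨hΩo, _hconn, _hbdd, r, hrC3, hΩr, hreg, _hslc⟩ := hΩ
  obtain ⟨hgeo, hφc, _hφdc, hφder, hφsdiff, hφsc, hμex, hnorm⟩ := hpkg
  obtain ⟨_hφdiff, hφmap, _⟩ := hgeo
  obtain ⟨_hϱmap, hleft, horth⟩ := hϱ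
  have hclball : closure unitDisc = Metric.closedBall (0 : ℂ) 1 := by
    rw [unitDisc, closure_ball (0 : ℂ) one_ne_zero]
  have hint : ∀ w ∈ unitDisc, ∀ u : Cn n, D (φ w) u = ∑ j, u j * φs w j := by
    intro w hw u
    exact interior_formula hΩo hφmap hφder hφsdiff
      (fun ξ hξ => hnorm ξ (subset_closure hξ)) hleft horth hD hw u
  intro ζ hζ ν hν v
  have hζ_cl : ζ ∈ closure unitDisc := by
    rw [hclball]; exact Metric.sphere_subset_closedBall hζ
  have hζnorm : ‖ζ‖ = 1 := mem_sphere_zero_iff_norm.mp hζ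
  -- a sequence in the disc tending to ζ
  set wseq : ℕ → ℂ := fun k => ((1 - 1 / ((k : ℝ) + 1) : ℝ) : ℂ) * ζ with hwseq
  have hfrac : ∀ k : ℕ, 0 < 1 / ((k : ℝ) + 1) ∧ 1 / ((k : ℝ) + 1) ≤ 1 := by
    intro k
    constructor
    · positivity
    · rw [div_le_one (by positivity)]
      linarith [(Nat.cast_nonneg k : (0:ℝ) ≤ (k:ℝ))]
  have hwk_mem : ∀ k : ℕ, wseq k ∈ unitDisc := by
    intro k
    show ((1 - 1 / ((k : ℝ) + 1) : ℝ) : ℂ) * ζ ∈ Metric.ball (0:ℂ) 1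
    rw [mem_ball_zero_iff, norm_mul, hζnorm, mul_one, Complex.norm_real, Real.norm_eq_abs,
      _root_.abs_of_nonneg (by linarith [(hfrac k).2])]
    linarith [(hfrac k).1]
  have hwk_tend : Tendsto wseq atTop (nhds ζ) := by
    have h1 : Tendsto (fun k : ℕ => (1 - 1 / ((k : ℝ) + 1))) atTop (nhds 1) := by
      simpa using tendsto_one_div_add_atTop_nhds_zero_nat.const_sub (1:ℝ)
    have h2 : Tendsto (fun k : ℕ => ((1 - 1 / ((k : ℝ) + 1) : ℝ) : ℂ)) atTop
        (nhds ((1 : ℝ) : ℂ)) := (Complex.continuous_ofReal.tendsto _).comp h1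
    have h3 := h2.mul_const ζ
    rw [Complex.ofReal_one, one_mul] at h3
    exact h3
  have hφ_tend : Tendsto (fun k => φ (wseq k)) atTop (nhds (φ ζ)) :=
    (hφc ζ hζ_cl).tendsto.comp
      (tendsto_nhdsWithin_of_tendsto_nhds_of_eventually_within _ hwk_tend
        (Eventually.of_forall fun k => subset_closure (hwk_mem k)))
  have hφζ_cl : φ ζ ∈ closure Ω :=
    mem_closure_of_tendsto hφ_tend (Eventually.of_forall fun k => hφmap (hwk_mem k))
  have hD_tend : Tendsto (fun k => D (φ (wseq k))) atTop (nhds (D (φ ζ))) :=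
    (hDc (φ ζ) hφζ_cl).tendsto.comp
      (tendsto_nhdsWithin_of_tendsto_nhds_of_eventually_within _ hφ_tend
        (Eventually.of_forall fun k => subset_closure (hφmap (hwk_mem k))))
  have hDv_tend : Tendsto (fun k => D (φ (wseq k)) v) atTop (nhds (D (φ ζ) v)) :=
    ((ContinuousLinearMap.apply ℂ ℂ v).continuous.tendsto _).comp hD_tend
  have hφs_tend : Tendsto (fun k => φs (wseq k)) atTop (nhds (φs ζ)) :=
    (hφsc ζ hζ_cl).tendsto.comp
      (tendsto_nhdsWithin_of_tendsto_nhds_of_eventually_within _ hwk_tend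
        (Eventually.of_forall fun k => subset_closure (hwk_mem k)))
  have hsumc : Continuous fun x : Cn n => ∑ j, v j * x j := by
    apply continuous_finset_sum
    intro j _
    exact continuous_const.mul (EuclideanSpace.proj j : Cn n →L[ℂ] ℂ).continuous
  have hsum_tend : Tendsto (fun k => ∑ j, v j * φs (wseq k) j) atTop
      (nhds (∑ j, v j * φs ζ j)) := (hsumc.tendsto _).comp hφs_tend
  have hbd : D (φ ζ) v = ∑ j, v j * φs ζ j :=
    tendsto_nhds_unique hDv_tend
      (hsum_tend.congr fun k => (hint (wseq k) (hwk_mem k) v).symm)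
  -- dual map data at ζ
  obtain ⟨μ, hμ⟩ := hμex
  obtain ⟨hμpos, ν₀, hν₀n, hφsformula⟩ := hμ ζ hζ
  have hνν₀ : ν = ν₀ :=
    normal_unique hrC3 hΩr hreg (frontier_of_normal hΩo hν₀n) hν hν₀n
  set m : ℂ := ζ * (μ ζ : ℂ) with hm
  have hmne : m ≠ 0 := by
    rw [hm]
    apply mul_ne_zero
    · intro h; rw [h] at hζnorm; simp at hζnorm
    · exact Complex.ofReal_ne_zero.mpr (ne_of_gt hμpos)
  have hφsj : ∀ j : Fin n, φs ζ j = m * (starRingEnd ℂ) (ν₀ j) := by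
    intro j
    rw [hφsformula]
    simp [conjVec, hm]
  have hsum : ∑ j, v j * φs ζ j = m * herm v ν₀ := by
    rw [herm, Finset.mul_sum]
    refine Finset.sum_congr rfl (fun j _ => ?_)
    rw [hφsj j]; ring
  have hherm_φd : herm (φd ζ) ν₀ = m⁻¹ := by
    have h1 := hnorm ζ hζ_cl
    have h2 : ∑ j, φd ζ j * φs ζ j = m * herm (φd ζ) ν₀ := by
      rw [herm, Finset.mul_sum]
      refine Finset.sum_congr rfl (fun j _ => ?_)
      rw [hφsj j]; ring
    rw [h2] at h1
    exact eq_inv_of_mul_eq_one_right h1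
  rw [hbd, hsum, hνν₀, hherm_φd, div_eq_mul_inv, inv_inv]
  ring
end
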